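/- For a positive integer k, the double sum over p from -k to k and q from -k to k of binom(2k, k+p)·binom(2k, k+q)·|p^2 - q^2| equals 2·k^2·binom(2k, k)^2. -/

import Mathlib

private def g (a b : ℤ) : ℤ :=
  |(a+1)^2 - (b+1)^2| + |(a+1)^2 - (b-1)^2| + |(a-1)^2 - (b+1)^2| + |(a-1)^2 - (b-1)^2|

private lemma g_neg_left (a b : ℤ) : g (-a) b = g a b := by
  unfold g
  have e1 : (-a+1)^2 = (a-1)^2 := by ring
  have e2 : (-a-1)^2 = (a+1)^2 := by ring
  rw [e1, e2]; ring

private lemma g_comm (a b : ℤ) : g a b = g b a := by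
  unfold g
  rw [abs_sub_comm ((a+1)^2), abs_sub_comm ((a+1)^2), abs_sub_comm ((a-1)^2),
    abs_sub_comm ((a-1)^2)]
  ring

private lemma g_neg_right (a b : ℤ) : g a (-b) = g a b := by
  rw [g_comm, g_neg_left, g_comm]

private lemma g_abs (a b : ℤ) : g a b = g |a| |b| := by
  rcases abs_choice a with h | h <;> rcases abs_choice b with h' | h' <;>
    rw [h, h'] <;> simp [g_neg_left, g_neg_right]

private lemma g_sorted (a b : ℤ) (h0 : 0 ≤ b) (hba : b ≤ a) (hpar : Even (a - b)) :
    g a b = 4 * (a^2 - b^2) + (if a = b then 8 * a else 0) := by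
  rcases eq_or_lt_of_le hba with rfl | hlt
  · rw [if_pos rfl]
    unfold g
    have e1 : (b+1)^2 - (b+1)^2 = 0 := by ring
    have e2 : (b+1)^2 - (b-1)^2 = 4*b := by ring
    have e3 : (b-1)^2 - (b+1)^2 = -(4*b) := by ring
    have e4 : (b-1)^2 - (b-1)^2 = 0 := by ring
    rw [e1, e2, e3, e4, abs_zero, abs_neg, abs_of_nonneg (by linarith : (0:ℤ) ≤ 4*b)]
    ring
  · have h2 : b + 2 ≤ a := by
      rcases hpar with ⟨c, hc⟩; omega
    rw [if_neg (by omega)]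
    unfold g
    rw [abs_of_nonneg (by nlinarith : (0:ℤ) ≤ (a+1)^2 - (b+1)^2),
        abs_of_nonneg (by nlinarith : (0:ℤ) ≤ (a+1)^2 - (b-1)^2),
        abs_of_nonneg (by nlinarith : (0:ℤ) ≤ (a-1)^2 - (b+1)^2),
        abs_of_nonneg (by nlinarith : (0:ℤ) ≤ (a-1)^2 - (b-1)^2)]
    ring

private lemma g_eval (a b : ℤ) (hpar : Even (a - b)) :
    g a b = 4 * |a^2 - b^2| + (if |a| = |b| then 8 * |a| else 0) := by
  have hpar' : Even (|a| - |b|) := by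
    obtain ⟨c, hc⟩ := hpar
    rcases abs_choice a with h | h <;> rcases abs_choice b with h' | h' <;> rw [h, h']
    · exact ⟨c, by omega⟩
    · exact ⟨c + b, by omega⟩
    · exact ⟨-c - b, by omega⟩
    · exact ⟨-c, by omega⟩
  have hsq : |a^2 - b^2| = |(|a|)^2 - (|b|)^2| := by rw [sq_abs, sq_abs]
  rw [g_abs, hsq]
  rcases le_total |b| |a| with hle | hle
  · rw [g_sorted _ _ (abs_nonneg b) hle hpar',
      abs_of_nonneg (by nlinarith [abs_nonneg a, abs_nonneg b] : (0:ℤ) ≤ (|a|)^2 - (|b|)^2)]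
  · rw [g_comm, g_sorted _ _ (abs_nonneg a) hle (by simpa using hpar'.neg),
      abs_of_nonpos (by nlinarith [abs_nonneg a, abs_nonneg b] : (|a|)^2 - (|b|)^2 ≤ 0)]
    by_cases hab : |a| = |b|
    · rw [if_pos hab, if_pos hab.symm, hab]; ring
    · rw [if_neg hab, if_neg (Ne.symm hab)]; ring


private lemma pascal_sum (n : ℕ) (f : ℕ → ℤ) :
    ∑ i ∈ Finset.range (n+2), (Nat.choose (n+1) i : ℤ) * f i
      = ∑ i ∈ Finset.range (n+1), (Nat.choose n i : ℤ) * (f i + f (i+1)) := by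
  rw [Finset.sum_range_succ' (fun i => (Nat.choose (n+1) i : ℤ) * f i) (n+1)]
  have h1 : ∀ i, (Nat.choose (n+1) (i+1) : ℤ) = Nat.choose n i + Nat.choose n (i+1) := by
    intro i
    rw [Nat.choose_succ_succ']
    push_cast; ring
  calc (∑ i ∈ Finset.range (n+1), (Nat.choose (n+1) (i+1) : ℤ) * f (i+1))
        + (Nat.choose (n+1) 0 : ℤ) * f 0
      = (∑ i ∈ Finset.range (n+1), ((Nat.choose n i : ℤ) * f (i+1)
          + (Nat.choose n (i+1) : ℤ) * f (i+1))) + f 0 := by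
        rw [Nat.choose_zero_right]
        congr 1
        · exact Finset.sum_congr rfl fun i _ => by rw [h1]; ring
        · push_cast; ring
    _ = (∑ i ∈ Finset.range (n+1), (Nat.choose n i : ℤ) * f (i+1))
          + ((∑ i ∈ Finset.range (n+1), (Nat.choose n (i+1) : ℤ) * f (i+1)) + f 0) := by
        rw [Finset.sum_add_distrib]; ring
    _ = (∑ i ∈ Finset.range (n+1), (Nat.choose n i : ℤ) * f (i+1))
          + (∑ i ∈ Finset.range (n+2), (Nat.choose n i : ℤ) * f i) := by
        congr 1
        rw [Finset.sum_range_succ' (fun i => (Nat.choose n i : ℤ) * f i) (n+1)]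
        rw [Nat.choose_zero_right]; push_cast; ring
    _ = (∑ i ∈ Finset.range (n+1), (Nat.choose n i : ℤ) * f (i+1))
          + (∑ i ∈ Finset.range (n+1), (Nat.choose n i : ℤ) * f i) := by
        congr 1
        rw [Finset.sum_range_succ]
        simp [Nat.choose_succ_self]
    _ = _ := by rw [← Finset.sum_add_distrib]; exact Finset.sum_congr rfl fun i _ => by ring

private def Sn (n : ℕ) : ℤ :=
  ∑ i ∈ Finset.range (n+1), ∑ j ∈ Finset.range (n+1),
    (Nat.choose n i : ℤ) * (Nat.choose n j : ℤ)
      * |((2*i : ℤ) - n)^2 - ((2*j : ℤ) - n)^2|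

private def En (n : ℕ) : ℤ :=
  ∑ i ∈ Finset.range (n+1), ∑ j ∈ Finset.range (n+1),
    (Nat.choose n i : ℤ) * (Nat.choose n j : ℤ)
      * (if |(2*i : ℤ) - n| = |(2*j : ℤ) - n| then |(2*i : ℤ) - n| else 0)

private lemma Sn_succ (n : ℕ) : Sn (n+1) = 4 * Sn n + 8 * En n := by
  have habs : ∀ i j : ℕ,
      |((2*i : ℤ) - (n+1))^2 - ((2*j : ℤ) - (n+1))^2|
        = |(((2*i : ℤ) - n) - 1)^2 - (((2*j : ℤ) - n) - 1)^2| := by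
    intro i j; congr 2 <;> push_cast <;> ring
  have habs2 : ∀ i j : ℕ,
      |((2*(i+1) : ℤ) - (n+1))^2 - ((2*j : ℤ) - (n+1))^2|
        = |(((2*i : ℤ) - n) + 1)^2 - (((2*j : ℤ) - n) - 1)^2| := by
    intro i j; congr 2 <;> push_cast <;> ring
  calc Sn (n+1)
      = ∑ i ∈ Finset.range (n+2), (Nat.choose (n+1) i : ℤ) *
          (∑ j ∈ Finset.range (n+2), (Nat.choose (n+1) j : ℤ)
            * |((2*i : ℤ) - (n+1))^2 - ((2*j : ℤ) - (n+1))^2|) := by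
        unfold Sn
        push_cast
        refine Finset.sum_congr rfl fun i _ => ?_
        rw [Finset.mul_sum]
        exact Finset.sum_congr rfl fun j _ => by push_cast; ring
    _ = ∑ i ∈ Finset.range (n+1), (Nat.choose n i : ℤ) *
          ((∑ j ∈ Finset.range (n+2), (Nat.choose (n+1) j : ℤ)
            * |((2*i : ℤ) - (n+1))^2 - ((2*j : ℤ) - (n+1))^2|)
          + (∑ j ∈ Finset.range (n+2), (Nat.choose (n+1) j : ℤ)
            * |((2*(i+1) : ℤ) - (n+1))^2 - ((2*j : ℤ) - (n+1))^2|)) :=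
        pascal_sum n _
    _ = ∑ i ∈ Finset.range (n+1), (Nat.choose n i : ℤ) *
          (∑ j ∈ Finset.range (n+2), (Nat.choose (n+1) j : ℤ)
            * (|((2*i : ℤ) - (n+1))^2 - ((2*j : ℤ) - (n+1))^2|
              + |((2*(i+1) : ℤ) - (n+1))^2 - ((2*j : ℤ) - (n+1))^2|)) := by
        refine Finset.sum_congr rfl fun i _ => ?_
        congr 1
        rw [← Finset.sum_add_distrib]
        exact Finset.sum_congr rfl fun j _ => by ring
    _ = ∑ i ∈ Finset.range (n+1), (Nat.choose n i : ℤ) *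
          (∑ j ∈ Finset.range (n+1), (Nat.choose n j : ℤ)
            * ((|((2*i : ℤ) - (n+1))^2 - ((2*j : ℤ) - (n+1))^2|
              + |((2*(i+1) : ℤ) - (n+1))^2 - ((2*j : ℤ) - (n+1))^2|)
             + (|((2*i : ℤ) - (n+1))^2 - ((2*(j+1) : ℤ) - (n+1))^2|
              + |((2*(i+1) : ℤ) - (n+1))^2 - ((2*(j+1) : ℤ) - (n+1))^2|))) := by
        refine Finset.sum_congr rfl fun i _ => ?_
        congr 1
        exact pascal_sum n _
    _ = ∑ i ∈ Finset.range (n+1), ∑ j ∈ Finset.range (n+1),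
          (Nat.choose n i : ℤ) * (Nat.choose n j : ℤ)
            * g ((2*i : ℤ) - n) ((2*j : ℤ) - n) := by
        refine Finset.sum_congr rfl fun i _ => ?_
        rw [Finset.mul_sum]
        refine Finset.sum_congr rfl fun j _ => ?_
        unfold g
        rw [habs, habs2]
        rw [show |((2*i : ℤ) - (n+1))^2 - ((2*(j+1) : ℤ) - (n+1))^2|
          = |(((2*i : ℤ) - n) - 1)^2 - (((2*j : ℤ) - n) + 1)^2| from by
            congr 2 <;> push_cast <;> ring]
        rw [show |((2*(i+1) : ℤ) - (n+1))^2 - ((2*(j+1) : ℤ) - (n+1))^2|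
          = |(((2*i : ℤ) - n) + 1)^2 - (((2*j : ℤ) - n) + 1)^2| from by
            congr 2 <;> push_cast <;> ring]
        ring
    _ = ∑ i ∈ Finset.range (n+1), ∑ j ∈ Finset.range (n+1),
          (Nat.choose n i : ℤ) * (Nat.choose n j : ℤ)
            * (4 * |((2*i : ℤ) - n)^2 - ((2*j : ℤ) - n)^2|
              + (if |(2*i : ℤ) - n| = |(2*j : ℤ) - n| then 8 * |(2*i : ℤ) - n| else 0)) := by
        refine Finset.sum_congr rfl fun i _ => Finset.sum_congr rfl fun j _ => ?_
        rw [g_eval _ _ ⟨(i : ℤ) - j, by ring⟩]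
    _ = 4 * Sn n + 8 * En n := by
        unfold Sn En
        rw [Finset.mul_sum, Finset.mul_sum, ← Finset.sum_add_distrib]
        refine Finset.sum_congr rfl fun i _ => ?_
        rw [Finset.mul_sum, Finset.mul_sum, ← Finset.sum_add_distrib]
        refine Finset.sum_congr rfl fun j _ => ?_
        by_cases h : |(2*i : ℤ) - n| = |(2*j : ℤ) - n|
        · rw [if_pos h, if_pos h]; ring
        · rw [if_neg h, if_neg h]; ring

private def Dn (n : ℕ) : ℤ :=
  ∑ i ∈ Finset.range (n+1), (Nat.choose n i : ℤ)^2 * |(2*i : ℤ) - n|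

private lemma En_eval (n : ℕ) : En n = 2 * Dn n := by
  unfold En Dn
  rw [Finset.mul_sum]
  refine Finset.sum_congr rfl fun i hi => ?_
  have hin : i ≤ n := by simpa using Nat.lt_succ_iff.mp (Finset.mem_range.mp hi)
  by_cases h0 : 2 * i = n
  · have hz : |(2*i : ℤ) - n| = 0 := by
      rw [abs_eq_zero]
      have : ((2*i : ℕ) : ℤ) = n := by exact_mod_cast congrArg (Nat.cast : ℕ → ℤ) h0
      push_cast at this ⊢; omega
    rw [hz]
    simp
  · -- condition on j: |2j - n| = |2i - n| ↔ j = i ∨ j = n - i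
    have hcond : ∀ j ∈ Finset.range (n+1),
        (Nat.choose n i : ℤ) * (Nat.choose n j : ℤ)
          * (if |(2*i : ℤ) - n| = |(2*j : ℤ) - n| then |(2*i : ℤ) - n| else 0)
        = (Nat.choose n i : ℤ) * ((if j = i then (Nat.choose n j : ℤ) * |(2*i : ℤ) - n| else 0)
            + (if j = n - i then (Nat.choose n j : ℤ) * |(2*i : ℤ) - n| else 0)) := by
      intro j hj
      have hjn : j ≤ n := by simpa using Nat.lt_succ_iff.mp (Finset.mem_range.mp hj)
      have hiff : (|(2*i : ℤ) - n| = |(2*j : ℤ) - n|) ↔ (j = i ∨ j = n - i) := by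
        rw [abs_eq_abs]
        constructor
        · rintro (h | h) <;> [left; right] <;> omega
        · rintro (rfl | rfl) <;> [left; right] <;> push_cast <;> omega
      by_cases hc : |(2*i : ℤ) - n| = |(2*j : ℤ) - n|
      · rcases hiff.mp hc with rfl | rfl
        · rw [if_pos hc, if_pos rfl, if_neg (by omega)]; ring
        · rw [if_pos hc, if_pos rfl, if_neg (by omega)]; ring
      · rw [if_neg hc, if_neg (fun h => hc (hiff.mpr (Or.inl h))),
          if_neg (fun h => hc (hiff.mpr (Or.inr h)))]
        ring
    rw [Finset.sum_congr rfl hcond]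
    rw [← Finset.mul_sum, Finset.sum_add_distrib,
      Finset.sum_ite_eq' (Finset.range (n+1)) i
        (fun j => (Nat.choose n j : ℤ) * |(2*i : ℤ) - n|),
      Finset.sum_ite_eq' (Finset.range (n+1)) (n - i)
        (fun j => (Nat.choose n j : ℤ) * |(2*i : ℤ) - n|),
      if_pos hi, if_pos (by simp only [Finset.mem_range]; omega : n - i ∈ Finset.range (n+1)),
      Nat.choose_symm hin]
    ring

-- telescoping pointwise identity
private lemma tele_pt (m i : ℕ) (h1 : 1 ≤ i) (h2 : i ≤ m) :
    ((2*i : ℤ) - m) * (Nat.choose m i : ℤ)^2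
      = m * ((Nat.choose (m-1) (i-1) : ℤ)^2 - (Nat.choose (m-1) i : ℤ)^2) := by
  obtain ⟨m', rfl⟩ : ∃ m', m = m' + 1 := ⟨m - 1, by omega⟩
  obtain ⟨i', rfl⟩ : ∃ i', i = i' + 1 := ⟨i - 1, by omega⟩
  simp only [Nat.add_sub_cancel]
  have hA : (m' + 1) * Nat.choose m' i' = Nat.choose (m'+1) (i'+1) * (i'+1) :=
    Nat.add_one_mul_choose_eq m' i'
  have hP : Nat.choose (m'+1) (i'+1) = Nat.choose m' i' + Nat.choose m' (i'+1) :=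
    Nat.choose_succ_succ m' i'
  have hPi : (Nat.choose (m'+1) (i'+1) : ℤ)
      = (Nat.choose m' i' : ℤ) + (Nat.choose m' (i'+1) : ℤ) := by exact_mod_cast hP
  have hA' : ((m' : ℤ) + 1) * (Nat.choose m' i' : ℤ)
      = (Nat.choose (m'+1) (i'+1) : ℤ) * ((i' : ℤ)+1) := by exact_mod_cast hA
  rw [hPi] at hA'
  rw [hPi]
  push_cast
  linear_combination (-2 * ((Nat.choose m' i' : ℤ) + (Nat.choose m' (i'+1) : ℤ))) * hA'

private lemma tele_sum (m t : ℕ) : ∀ s, t ≤ s → s ≤ m →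
    ∑ i ∈ Finset.Ico (t+1) (s+1), ((2*i : ℤ) - m) * (Nat.choose m i : ℤ)^2
      = m * ((Nat.choose (m-1) t : ℤ)^2 - (Nat.choose (m-1) s : ℤ)^2) := by
  intro s
  induction s with
  | zero => intro h1 _; interval_cases t; simp
  | succ s ih =>
      intro h1 h2
      rcases Nat.lt_or_ge t (s+1) with hlt | hge
      · rw [Finset.sum_Ico_succ_top (by omega : t + 1 ≤ s + 1)]
        rw [ih (by omega) (by omega)]
        rw [tele_pt m (s+1) (by omega) h2]
        simp only [Nat.add_sub_cancel]
        ring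
      · have : t = s + 1 := by omega
        subst this
        simp
  
private lemma Dn_eval (m : ℕ) (hm : 1 ≤ m) :
    Dn m = 2 * m * (Nat.choose (m-1) (m/2) : ℤ)^2 := by
  have habs : ∀ x : ℤ, |x| = max x 0 + max (-x) 0 := by
    intro x
    rcases le_total x 0 with h | h
    · rw [abs_of_nonpos h, max_eq_right h, max_eq_left (by omega)]; ring
    · rw [abs_of_nonneg h, max_eq_left h, max_eq_right (by omega)]; ring
  have step1 : Dn m = 2 * ∑ i ∈ Finset.range (m+1),
      (Nat.choose m i : ℤ)^2 * max ((2*i : ℤ) - m) 0 := by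
    unfold Dn
    have : ∀ i ∈ Finset.range (m+1), (Nat.choose m i : ℤ)^2 * |(2*i : ℤ) - m|
        = (Nat.choose m i : ℤ)^2 * max ((2*i : ℤ) - m) 0
          + (Nat.choose m i : ℤ)^2 * max (m - (2*i : ℤ)) 0 := by
      intro i _
      rw [habs ((2*i : ℤ) - m)]
      have : -((2*i : ℤ) - m) = m - 2*i := by ring
      rw [this]; ring
    rw [Finset.sum_congr rfl this, Finset.sum_add_distrib]
    have hrefl : ∑ i ∈ Finset.range (m+1), (Nat.choose m i : ℤ)^2 * max ((m : ℤ) - 2*i) 0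
        = ∑ i ∈ Finset.range (m+1), (Nat.choose m i : ℤ)^2 * max ((2*i : ℤ) - m) 0 := by
      rw [← Finset.sum_range_reflect
        (fun i => (Nat.choose m i : ℤ)^2 * max ((m : ℤ) - 2*i) 0) (m+1)]
      refine Finset.sum_congr rfl fun i hi => ?_
      have him : i ≤ m := by simpa using Nat.lt_succ_iff.mp (Finset.mem_range.mp hi)
      have e1 : m + 1 - 1 - i = m - i := by omega
      rw [e1, Nat.choose_symm him]
      have e2 : ((m - i : ℕ) : ℤ) = (m : ℤ) - i := by omega
      rw [e2]
      have e3 : (m : ℤ) - 2*((m : ℤ) - i) = (2*i : ℤ) - m := by ring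
      rw [e3]
    rw [hrefl]; ring
  rw [step1]
  have step2 : ∑ i ∈ Finset.range (m+1), (Nat.choose m i : ℤ)^2 * max ((2*i : ℤ) - m) 0
      = ∑ i ∈ Finset.Ico (m/2+1) (m+1), ((2*i : ℤ) - m) * (Nat.choose m i : ℤ)^2 := by
    rw [Finset.range_eq_Ico, ← Finset.sum_Ico_consecutive _ (by omega : 0 ≤ m/2+1)
      (by omega : m/2+1 ≤ m+1)]
    have hlow : ∑ i ∈ Finset.Ico 0 (m/2+1), (Nat.choose m i : ℤ)^2 * max ((2*i : ℤ) - m) 0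
        = 0 := by
      refine Finset.sum_eq_zero fun i hi => ?_
      have hi2 : i < m/2 + 1 := (Finset.mem_Ico.mp hi).2
      have h2i : (2*i : ℕ) ≤ m := by omega
      have hmax : max ((2*i : ℤ) - m) 0 = 0 := by
        apply max_eq_right
        push_cast
        omega
      rw [hmax, mul_zero]
    rw [hlow, zero_add]
    refine Finset.sum_congr rfl fun i hi => ?_
    have : m/2 + 1 ≤ i := (Finset.mem_Ico.mp hi).1
    have hmax : max ((2*i : ℤ) - m) 0 = (2*i : ℤ) - m := by
      apply max_eq_left
      have : m + 1 ≤ 2*i := by omega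
      push_cast
      omega
    rw [hmax]; ring
  rw [step2, tele_sum m (m/2) m (by omega) le_rfl,
    Nat.choose_eq_zero_of_lt (by omega : m - 1 < m)]
  push_cast
  ring

private lemma Sn_closed : ∀ n : ℕ,
    Sn n = 16 * (n : ℤ) * ((n/2 : ℕ) : ℤ) * (Nat.choose (n-1) ((n-1)/2) : ℤ)^2 := by
  intro n
  induction n with
  | zero => unfold Sn; simp
  | succ n ih =>
      rw [Sn_succ, En_eval, ih]
      rcases Nat.eq_zero_or_pos n with rfl | hn
      · unfold Dn; simp
      · rw [Dn_eval n hn]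
        rcases Nat.even_or_odd n with ⟨m, rfl⟩ | ⟨m, rfl⟩
        · -- n = 2m, m ≥ 1
          have hm : 1 ≤ m := by omega
          have e1 : m + m + 1 - 1 = m + m := by omega
          have e2 : (m + m + 1) / 2 = m := by omega
          have e3 : (m + m) / 2 = m := by omega
          have e4 : (m + m - 1) / 2 = m - 1 := by omega
          rw [e1, e2, e3, e4]
          have hsym : Nat.choose (m + m - 1) m = Nat.choose (m + m - 1) (m - 1) := by
            have h := Nat.choose_symm (n := m + m - 1) (k := m) (by omega)
            rw [show m + m - 1 - m = m - 1 by omega] at h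
            exact h.symm
          have hpas : Nat.choose (m + m) m
              = Nat.choose (m + m - 1) (m - 1) + Nat.choose (m + m - 1) m := by
            have h1 : m + m = (m + m - 1) + 1 := by omega
            have h2 : m = (m - 1) + 1 := by omega
            rw [h1, h2, Nat.choose_succ_succ]
            congr 2 <;> omega
          rw [hsym] at hpas
          rw [hsym]
          have hpasZ : (Nat.choose (m + m) m : ℤ)
              = 2 * (Nat.choose (m + m - 1) (m - 1) : ℤ) := by
            rw [hpas]; push_cast; ring
          rw [hpasZ]
          push_cast
          ring
        · -- n = 2m + 1
          have e1 : 2*m + 1 + 1 - 1 = 2*m + 1 := by omega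
          have e2 : (2*m + 1 + 1) / 2 = m + 1 := by omega
          have e3 : (2*m + 1) / 2 = m := by omega
          have e4 : (2*m + 1 - 1) / 2 = m := by omega
          have e5 : 2*m + 1 - 1 = 2*m := by omega
          rw [e1, e2, e3, e4, e5]
          have hA : (2*m + 1) * Nat.choose (2*m) m = Nat.choose (2*m+1) (m+1) * (m+1) :=
            Nat.add_one_mul_choose_eq (2*m) m
          have hsym : Nat.choose (2*m+1) (m+1) = Nat.choose (2*m+1) m := by
            have h := Nat.choose_symm (n := 2*m+1) (k := m+1) (by omega)
            rw [show 2*m+1-(m+1) = m by omega] at h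
            exact h.symm
          rw [hsym] at hA
          have hAZ : (2*(m:ℤ) + 1) * (Nat.choose (2*m) m : ℤ)
              = (Nat.choose (2*m+1) m : ℤ) * ((m:ℤ)+1) := by exact_mod_cast hA
          push_cast
          linear_combination (32 * (((m:ℤ)+1) * (Nat.choose (2*m+1) m : ℤ)
            + (2*(m:ℤ)+1) * (Nat.choose (2*m) m : ℤ))) * hAZ

private lemma reindex (k : ℕ) (f : ℤ → ℤ) :
    ∑ p ∈ Finset.Icc (-(k : ℤ)) k, f p
      = ∑ i ∈ Finset.range (2*k+1), f ((i : ℤ) - k) := by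
  have hmap : (Finset.range (2*k+1)).map
      ⟨fun i : ℕ => (i : ℤ) - k, fun a b h => by simpa using h⟩ = Finset.Icc (-(k : ℤ)) k := by
    ext x
    simp only [Finset.mem_map, Finset.mem_range, Finset.mem_Icc,
      Function.Embedding.coeFn_mk]
    constructor
    · rintro ⟨i, hi, rfl⟩; change -(k:ℤ) ≤ (i:ℤ) - k ∧ (i:ℤ) - k ≤ k; omega
    · intro h; exact ⟨(x + k).toNat, by omega, by change (((x + k).toNat : ℕ) : ℤ) - k = x; omega⟩
  rw [← hmap, Finset.sum_map]
  rfl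

theorem stmt_8 (k : ℕ) (hk : 0 < k) :
    ∑ p ∈ Finset.Icc (-(k : ℤ)) k, ∑ q ∈ Finset.Icc (-(k : ℤ)) k,
        (Nat.choose (2 * k) ((k + p).toNat) : ℤ) *
          (Nat.choose (2 * k) ((k + q).toNat) : ℤ) * |p ^ 2 - q ^ 2|
      = 2 * (k : ℤ) ^ 2 * (Nat.choose (2 * k) k : ℤ) ^ 2 := by
  set L := ∑ p ∈ Finset.Icc (-(k : ℤ)) k, ∑ q ∈ Finset.Icc (-(k : ℤ)) k,
        (Nat.choose (2 * k) ((k + p).toNat) : ℤ) *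
          (Nat.choose (2 * k) ((k + q).toNat) : ℤ) * |p ^ 2 - q ^ 2| with hL
  have key : Sn (2*k) = 4 * L := by
    rw [hL]
    rw [reindex k]
    unfold Sn
    rw [Finset.mul_sum]
    refine Finset.sum_congr rfl fun i hi => ?_
    rw [reindex k, Finset.mul_sum]
    refine Finset.sum_congr rfl fun j hj => ?_
    have hi' : i < 2*k+1 := Finset.mem_range.mp hi
    have hj' : j < 2*k+1 := Finset.mem_range.mp hj
    have hti : ((k : ℤ) + ((i : ℤ) - k)).toNat = i := by omega
    have htj : ((k : ℤ) + ((j : ℤ) - k)).toNat = j := by omega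
    rw [hti, htj]
    have habs : |((2*i : ℤ) - (2*k : ℕ))^2 - ((2*j : ℤ) - (2*k : ℕ))^2|
        = 4 * |((i : ℤ) - k)^2 - ((j : ℤ) - k)^2| := by
      rw [← abs_of_nonneg (by norm_num : (0:ℤ) ≤ 4), ← abs_mul]
      congr 1
      push_cast
      ring
    rw [habs]
    ring
  have hclosed := Sn_closed (2*k)
  have e1 : 2*k/2 = k := by omega
  have e2 : (2*k-1)/2 = k - 1 := by omega
  rw [e1, e2] at hclosed
  -- C(2k, k) = 2 * C(2k-1, k-1)
  have hpas : Nat.choose (2*k) k = Nat.choose (2*k-1) (k-1) + Nat.choose (2*k-1) k := by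
    have h1 : 2*k = (2*k-1) + 1 := by omega
    have h2 : k = (k-1) + 1 := by omega
    rw [h1, h2, Nat.choose_succ_succ]
    congr 2 <;> omega
  have hsym : Nat.choose (2*k-1) k = Nat.choose (2*k-1) (k-1) := by
    have h := Nat.choose_symm (n := 2*k-1) (k := k) (by omega)
    rw [show 2*k-1-k = k-1 by omega] at h
    exact h.symm
  rw [hsym] at hpas
  have hpasZ : (Nat.choose (2*k) k : ℤ) = 2 * (Nat.choose (2*k-1) (k-1) : ℤ) := by
    rw [hpas]; push_cast; ring
  have h4 : (4 : ℤ) * L = 4 * (2 * (k : ℤ) ^ 2 * (Nat.choose (2 * k) k : ℤ) ^ 2) := by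
    rw [← key, hclosed, hpasZ]
    push_cast
    ring
  linarith
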